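/- Let α be a linear order and let C₁, C₂ : Fin k → α be monotone sequences. Define B_e(C) = C(μ_e(C), 2), the binomial coefficient of the multiplicity of e choose 2. Then B_e(C₁ ⊔ C₂) + B_e(C₁ ⊓ C₂) ≤ B_e(C₁) + B_e(C₂) for every e ∈ α; i.e., B_e is submodular on the lattice of monotone sequences. -/
import Mathlib

private lemma key_choose (n : ℕ) : n.choose 2 * 2 + n = n * n := by
  induction n with
  | zero => rfl
  | succ n ih =>
    rw [Nat.choose_succ_succ, Nat.choose_one_right]
    nlinarith [ih]

private lemma choose2_sub {s t a b : ℕ} (hsum : s + t = a + b)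
    (hs : s ≤ max a b) (ht : t ≤ max a b) :
    s.choose 2 + t.choose 2 ≤ a.choose 2 + b.choose 2 := by
  have h2 : s * s + t * t ≤ a * a + b * b := by
    rcases le_total a b with h | h
    · have hsb : s ≤ b := le_trans hs (by simp [h])
      have has : a ≤ s := by
        have : t ≤ b := le_trans ht (by simp [h])
        omega
      nlinarith
    · have hsb : s ≤ a := le_trans hs (by simp [h])
      have has : b ≤ s := by
        have : t ≤ a := le_trans ht (by simp [h])
        omega
      nlinarith
  nlinarith [key_choose s, key_choose t, key_choose a, key_choose b]

private lemma sup_subset {α : Type*} [LinearOrder α] {k : ℕ}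
    {C₁ C₂ : Fin k → α} (h₁ : Monotone C₁) (h₂ : Monotone C₂) (e : α) :
    (Finset.univ.filter fun i => (C₁ ⊔ C₂) i = e) ⊆
      (Finset.univ.filter fun i => C₁ i = e) ∨
    (Finset.univ.filter fun i => (C₁ ⊔ C₂) i = e) ⊆
      (Finset.univ.filter fun i => C₂ i = e) := by
  by_contra hc
  push_neg at hc
  obtain ⟨hA, hB⟩ := hc
  rw [Finset.not_subset] at hA hB
  obtain ⟨i, hiS, hiA⟩ := hA
  obtain ⟨j, hjS, hjB⟩ := hB
  simp only [Finset.mem_filter, Finset.mem_univ, true_and, Pi.sup_apply] at hiS hjS hiA hjB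
  have hi2 : C₂ i = e := by
    rcases le_total (C₁ i) (C₂ i) with h | h
    · rwa [sup_eq_right.2 h] at hiS
    · exact absurd (by rwa [sup_eq_left.2 h] at hiS) hiA
  have hj1 : C₁ j = e := by
    rcases le_total (C₁ j) (C₂ j) with h | h
    · exact absurd (by rwa [sup_eq_right.2 h] at hjS) hjB
    · rwa [sup_eq_left.2 h] at hjS
  have hi1 : C₁ i < e := lt_of_le_of_ne (hiS ▸ le_sup_left) hiA
  have hj2 : C₂ j < e := lt_of_le_of_ne (hjS ▸ le_sup_right) hjB
  have hij : i < j := by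
    by_contra hle
    push_neg at hle
    exact absurd (h₁ hle) (not_le.2 (hj1 ▸ hi1))
  have hji : j < i := by
    by_contra hle
    push_neg at hle
    exact absurd (h₂ hle) (not_le.2 (hi2 ▸ hj2))
  exact absurd hij (not_lt.2 hji.le)

private lemma inf_subset {α : Type*} [LinearOrder α] {k : ℕ}
    {C₁ C₂ : Fin k → α} (h₁ : Monotone C₁) (h₂ : Monotone C₂) (e : α) :
    (Finset.univ.filter fun i => (C₁ ⊓ C₂) i = e) ⊆
      (Finset.univ.filter fun i => C₁ i = e) ∨
    (Finset.univ.filter fun i => (C₁ ⊓ C₂) i = e) ⊆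
      (Finset.univ.filter fun i => C₂ i = e) := by
  by_contra hc
  push_neg at hc
  obtain ⟨hA, hB⟩ := hc
  rw [Finset.not_subset] at hA hB
  obtain ⟨i, hiS, hiA⟩ := hA
  obtain ⟨j, hjS, hjB⟩ := hB
  simp only [Finset.mem_filter, Finset.mem_univ, true_and, Pi.inf_apply] at hiS hjS hiA hjB
  have hi2 : C₂ i = e := by
    rcases le_total (C₁ i) (C₂ i) with h | h
    · exact absurd (by rwa [inf_eq_left.2 h] at hiS) hiA
    · rwa [inf_eq_right.2 h] at hiS
  have hj1 : C₁ j = e := by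
    rcases le_total (C₁ j) (C₂ j) with h | h
    · rwa [inf_eq_left.2 h] at hjS
    · exact absurd (by rwa [inf_eq_right.2 h] at hjS) hjB
  have hi1 : e < C₁ i := lt_of_le_of_ne (hiS ▸ inf_le_left) (Ne.symm hiA)
  have hj2 : e < C₂ j := lt_of_le_of_ne (hjS ▸ inf_le_right) (Ne.symm hjB)
  have hij : j < i := by
    by_contra hle
    push_neg at hle
    exact absurd (h₁ hle) (not_le.2 (hj1 ▸ hi1))
  have hji : i < j := by
    by_contra hle
    push_neg at hle
    exact absurd (h₂ hle) (not_le.2 (hi2 ▸ hj2))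
  exact absurd hij (not_lt.2 hji.le)

theorem binom_multiplicity_submodular {α : Type*} [LinearOrder α] {k : ℕ}
    (C₁ C₂ : Fin k → α) (h₁ : Monotone C₁) (h₂ : Monotone C₂) (e : α) :
    Nat.choose (Finset.univ.filter fun i => (C₁ ⊔ C₂) i = e).card 2 +
      Nat.choose (Finset.univ.filter fun i => (C₁ ⊓ C₂) i = e).card 2 ≤
    Nat.choose (Finset.univ.filter fun i => C₁ i = e).card 2 +
      Nat.choose (Finset.univ.filter fun i => C₂ i = e).card 2 := by
  classical
  set S := Finset.univ.filter fun i => (C₁ ⊔ C₂) i = e with hS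
  set T := Finset.univ.filter fun i => (C₁ ⊓ C₂) i = e with hT
  set A := Finset.univ.filter fun i => C₁ i = e with hA
  set B := Finset.univ.filter fun i => C₂ i = e with hB
  have hunion : S ∪ T = A ∪ B := by
    ext i
    simp only [hS, hT, hA, hB, Finset.mem_union, Finset.mem_filter, Finset.mem_univ, true_and,
      Pi.sup_apply, Pi.inf_apply]
    rcases le_total (C₁ i) (C₂ i) with h | h
    · rw [sup_eq_right.2 h, inf_eq_left.2 h]; try tauto
    · rw [sup_eq_left.2 h, inf_eq_right.2 h]; try tauto
  have hinter : S ∩ T = A ∩ B := by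
    ext i
    simp only [hS, hT, hA, hB, Finset.mem_inter, Finset.mem_filter, Finset.mem_univ, true_and,
      Pi.sup_apply, Pi.inf_apply]
    rcases le_total (C₁ i) (C₂ i) with h | h
    · rw [sup_eq_right.2 h, inf_eq_left.2 h]; try tauto
    · rw [sup_eq_left.2 h, inf_eq_right.2 h]; try tauto
  have hsum : S.card + T.card = A.card + B.card := by
    rw [← Finset.card_union_add_card_inter S T, ← Finset.card_union_add_card_inter A B,
      hunion, hinter]
  have hs : S.card ≤ max A.card B.card := by
    rcases sup_subset h₁ h₂ e with h | h
    · exact le_max_of_le_left (Finset.card_le_card h)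
    · exact le_max_of_le_right (Finset.card_le_card h)
  have ht : T.card ≤ max A.card B.card := by
    rcases inf_subset h₁ h₂ e with h | h
    · exact le_max_of_le_left (Finset.card_le_card h)
    · exact le_max_of_le_right (Finset.card_le_card h)
  exact choose2_sub hsum hs ht
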